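/- Let (W,∂) be a finite-dimensional cochain complex with adjoint ∂*, D = ∂+∂*, and α, β, γ ≥ 0. Suppose w, v ∈ W satisfy ‖∂w‖² ≤ αγ, ‖∂*v‖² ≤ αγ, and ‖w − v‖² ≤ β. Then ‖w − P^{[0,γ]}w‖² ≤ 3α + 2β and ‖v − P^{[0,γ]}v‖² ≤ 3α + 2β, where P^{[0,γ]} is the spectral projection of D² onto eigenvalues in [0,γ]. -/

import Mathlib

open LinearMap Module

local notation "⟪" x ", " y "⟫" => @inner ℂ _ _ x y

set_option maxHeartbeats 4000000 in
theorem aux4 {W : Type*} [NormedAddCommGroup W] [InnerProductSpace ℂ W]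
    [FiniteDimensional ℂ W] (d : W →ₗ[ℂ] W) (hd : d ∘ₗ d = 0)
    (α β γ : ℝ) (hα : 0 ≤ α) (hβ : 0 ≤ β) (hγ : 0 ≤ γ) (w v : W)
    (hw : ‖d w‖ ^ 2 ≤ α * γ) (hv : ‖LinearMap.adjoint d v‖ ^ 2 ≤ α * γ)
    (hwv : ‖w - v‖ ^ 2 ≤ β) :
    ‖w - (Submodule.orthogonalProjectionOnto
        (⨆ lam ∈ Set.Icc (0 : ℝ) γ, Module.End.eigenspace
          ((d + LinearMap.adjoint d) ∘ₗ (d + LinearMap.adjoint d)) (lam : ℂ)) w : W)‖ ^ 2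
      ≤ 3 * α + 2 * β := by
  classical
  set d' := LinearMap.adjoint d with hd'def
  have hdd' : d' ∘ₗ d' = 0 := by rw [hd'def, ← LinearMap.adjoint_comp, hd, map_zero]
  set T := (d + d') ∘ₗ (d + d') with hTdef
  have hdd0 : ∀ x, d (d x) = 0 := fun x => by
    have := LinearMap.ext_iff.mp hd x; simpa using this
  have hdd'0 : ∀ x, d' (d' x) = 0 := fun x => by
    have := LinearMap.ext_iff.mp hdd' x; simpa using this
  have hTx : ∀ x, T x = d (d' x) + d' (d x) := by
    intro x
    simp only [hTdef, LinearMap.comp_apply, LinearMap.add_apply, map_add, hdd0, hdd'0,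
      zero_add, add_zero]
    abel
  have hdadj : ∀ x y : W, ⟪d x, y⟫ = ⟪x, d' y⟫ := fun x y =>
    (LinearMap.adjoint_inner_right d x y).symm
  have hd'adj : ∀ x y : W, ⟪d' x, y⟫ = ⟪x, d y⟫ := fun x y =>
    LinearMap.adjoint_inner_left d y x
  have hre : ∀ x, RCLike.re ⟪T x, x⟫ = ‖d x‖ ^ 2 + ‖d' x‖ ^ 2 := by
    intro x
    rw [hTx, inner_add_left, hdadj (d' x) x, hd'adj (d x) x, map_add,
      inner_self_eq_norm_sq, inner_self_eq_norm_sq, add_comm]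
  set E := ⨆ lam ∈ Set.Icc (0 : ℝ) γ, Module.End.eigenspace T (lam : ℂ) with hEdef
  have hEsub : ∀ lam : ℝ, lam ∈ Set.Icc (0 : ℝ) γ → Module.End.eigenspace T (lam : ℂ) ≤ E := by
    intro lam hlam
    rw [hEdef]
    exact le_iSup₂ (f := fun (lam : ℝ) (_ : lam ∈ Set.Icc (0 : ℝ) γ) =>
      Module.End.eigenspace T (lam : ℂ)) lam hlam
  have hcomm : ∀ f : W →ₗ[ℂ] W, (∀ x, T (f x) = f (T x)) → (∀ x ∈ E, f x ∈ E) := by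
    intro f hf x hx
    have hle : Submodule.map f E ≤ E := by
      conv_lhs => rw [hEdef]
      rw [Submodule.map_iSup]
      refine iSup_le fun lam => ?_
      rw [Submodule.map_iSup]
      refine iSup_le fun hlam => le_trans ?_ (hEsub lam hlam)
      rintro y hy
      rw [Submodule.mem_map] at hy
      obtain ⟨x', hx', rfl⟩ := hy
      rw [Module.End.mem_eigenspace_iff] at hx' ⊢
      rw [hf, hx', map_smul]
    exact hle (Submodule.mem_map_of_mem hx)
  have hcommd : ∀ x, T (d x) = d (T x) := by
    intro x; rw [hTx, hTx, map_add]; simp [hdd0, hdd'0]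
  have hcommd' : ∀ x, T (d' x) = d' (T x) := by
    intro x; rw [hTx, hTx, map_add]; simp [hdd0, hdd'0]
  have hdE : ∀ x ∈ E, d x ∈ E := hcomm d hcommd
  have hd'E : ∀ x ∈ E, d' x ∈ E := hcomm d' hcommd'
  have hdEc : ∀ x ∈ Eᗮ, d x ∈ Eᗮ := by
    intro x hx
    rw [Submodule.mem_orthogonal]
    intro u hu
    rw [← hd'adj u x]
    exact (Submodule.mem_orthogonal E x).mp hx _ (hd'E u hu)
  have hd'Ec : ∀ x ∈ Eᗮ, d' x ∈ Eᗮ := by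
    intro x hx
    rw [Submodule.mem_orthogonal]
    intro u hu
    rw [← hdadj u x]
    exact (Submodule.mem_orthogonal E x).mp hx _ (hdE u hu)
  have hker0 : ∀ x ∈ Eᗮ, d x = 0 → d' x = 0 → x = 0 := by
    intro x hx h1 h2
    have hx0 : T x = 0 := by rw [hTx, h1, h2, map_zero, map_zero, add_zero]
    have hmem : x ∈ E := by
      refine hEsub 0 ⟨le_refl _, hγ⟩ ?_
      rw [Module.End.mem_eigenspace_iff]
      simp [hx0]
    have hmem2 : x ∈ E ⊓ Eᗮ := ⟨hmem, hx⟩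
    rwa [Submodule.inf_orthogonal_eq_bot, Submodule.mem_bot] at hmem2
  have hTEc : ∀ x ∈ Eᗮ, T x ∈ Eᗮ := fun x hx => by
    rw [hTx]
    exact Submodule.add_mem _ (hdEc _ (hd'Ec _ hx)) (hd'Ec _ (hdEc _ hx))
  have hTsym : T.IsSymmetric := by
    intro x y
    rw [hTx x, hTx y, inner_add_left, inner_add_right, hdadj (d' x) y, hd'adj (d x) y,
      ← hd'adj x (d' y), ← hdadj x (d y)]
  set T' := T.restrict hTEc with hT'def
  have hT'sym : T'.IsSymmetric := hTsym.restrict_invariant hTEc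
  have hT'coe : ∀ z : ↥Eᗮ, ((T' z : W)) = T ↑z := fun z => rfl
  -- gap lemma
  have hgap : ∀ x ∈ Eᗮ, γ * ‖x‖ ^ 2 ≤ RCLike.re ⟪T x, x⟫ := by
    intro x hx
    set b := hT'sym.eigenvectorBasis rfl with hbdef
    set μ := hT'sym.eigenvalues rfl with hμdef
    have hb : ∀ i, T' (b i) = (μ i : ℂ) • b i := fun i => hT'sym.apply_eigenvectorBasis rfl i
    have hbW : ∀ i, T ↑(b i) = (μ i : ℂ) • (↑(b i) : W) := fun i => by
      have := congrArg Subtype.val (hb i)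
      simpa [hT'coe] using this
    have hnorm1 : ∀ i, ‖(b i : W)‖ = 1 := fun i => by
      have := b.orthonormal.1 i
      exact this
    have hC : ∀ (r : ℝ) (c : ℂ), ((starRingEnd ℂ) ((r : ℂ) * c) * c).re = r * ‖c‖ ^ 2 := by
      intro r c
      simp [Complex.mul_re, Complex.mul_im, Complex.sq_norm,
        Complex.normSq_apply]
      ring
    have hμpos : ∀ i, γ < μ i := by
      intro i
      by_contra hcon
      push_neg at hcon
      have h1 : RCLike.re ⟪T ↑(b i), (↑(b i) : W)⟫ = μ i := by
        rw [hbW i, inner_smul_left, inner_self_eq_norm_sq_to_K, hnorm1 i]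
        simp [Complex.conj_ofReal]
      have h0 : 0 ≤ μ i := by
        rw [← h1, hre]
        positivity
      have hmemE : (↑(b i) : W) ∈ E := by
        refine hEsub (μ i) ⟨h0, hcon⟩ ?_
        rw [Module.End.mem_eigenspace_iff]
        exact hbW i
      have hmem2 : (↑(b i) : W) ∈ E ⊓ Eᗮ := ⟨hmemE, (b i).2⟩
      rw [Submodule.inf_orthogonal_eq_bot, Submodule.mem_bot] at hmem2
      have h2 := hnorm1 i
      rw [hmem2, norm_zero] at h2
      exact zero_ne_one h2
    set y : ↥Eᗮ := ⟨x, hx⟩ with hydef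
    have hrepr : ∀ z z' : ↥Eᗮ, (inner (𝕜 := ℂ) z z') =
        ∑ i, (starRingEnd ℂ) (b.repr z i) * b.repr z' i := by
      intro z z'
      rw [← b.repr.inner_map_map z z']
      rw [PiLp.inner_apply]; simp only [RCLike.inner_apply']
    have hTrepr : ∀ i, b.repr (T' y) i = (μ i : ℂ) * b.repr y i := fun i =>
      hT'sym.eigenvectorBasis_apply_self_apply rfl y i
    have hxy : RCLike.re ⟪T x, x⟫ = RCLike.re (inner (𝕜 := ℂ) (T' y) y) := by
      congr 1
    have hnormy : ‖x‖ ^ 2 = ∑ i, ‖b.repr y i‖ ^ 2 := by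
      have h1 : ‖x‖ ^ 2 = RCLike.re (inner (𝕜 := ℂ) y y) := by
        rw [inner_self_eq_norm_sq]
        rfl
      rw [h1, hrepr y y]
      rw [RCLike.re_to_complex, Complex.re_sum]
      refine Finset.sum_congr rfl fun i _ => ?_
      have := hC 1 (b.repr y i)
      simpa using this
    rw [hxy, hrepr (T' y) y, RCLike.re_to_complex, Complex.re_sum, hnormy, Finset.mul_sum]
    refine Finset.sum_le_sum fun i _ => ?_
    rw [hTrepr i, hC (μ i) (b.repr y i)]
    exact mul_le_mul_of_nonneg_right (le_of_lt (hμpos i)) (by positivity)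
  -- surjectivity on the orthogonal complement
  have hsurj : ∀ u ∈ Eᗮ, ∃ z ∈ Eᗮ, T z = u := by
    have h0 : ∀ z : ↥Eᗮ, T' z = 0 → z = 0 := by
      intro z hz
      have hz' : T (↑z : W) = 0 := by
        have := congrArg Subtype.val hz
        simpa only [hT'coe, ZeroMemClass.coe_zero] using this
      have hsum : ‖d (↑z : W)‖ ^ 2 + ‖d' (↑z : W)‖ ^ 2 = 0 := by
        rw [← hre, hz']
        simp
      have h1 : d (↑z : W) = 0 := by
        have h : ‖d (↑z : W)‖ ^ 2 = 0 :=
          le_antisymm (by linarith [sq_nonneg ‖d' (↑z : W)‖]) (sq_nonneg _)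
        exact norm_eq_zero.mp (sq_eq_zero_iff.mp h)
      have h2 : d' (↑z : W) = 0 := by
        have h : ‖d' (↑z : W)‖ ^ 2 = 0 :=
          le_antisymm (by linarith [sq_nonneg ‖d (↑z : W)‖]) (sq_nonneg _)
        exact norm_eq_zero.mp (sq_eq_zero_iff.mp h)
      exact Subtype.ext (by simpa using hker0 _ z.2 h1 h2)
    have hinj : Function.Injective T' := by
      intro a b hab
      have := h0 (a - b) (by rw [map_sub, hab, sub_self])
      rwa [sub_eq_zero] at this
    have hsurj' := LinearMap.injective_iff_surjective.mp hinj
    intro u hu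
    obtain ⟨z, hz⟩ := hsurj' ⟨u, hu⟩
    exact ⟨↑z, z.2, by simpa [hT'coe] using congrArg Subtype.val hz⟩
  -- projection facts
  set P := Submodule.orthogonalProjectionOnto E with hPdef
  have hproj_bound : ∀ f : W →ₗ[ℂ] W, (∀ x ∈ E, f x ∈ E) → (∀ x ∈ Eᗮ, f x ∈ Eᗮ) →
      ∀ x : W, ‖f (x - ↑(P x))‖ ^ 2 ≤ ‖f x‖ ^ 2 := by
    intro f hfE hfEc x
    have h1 : f x - f (x - ↑(P x)) ∈ E := by
      rw [map_sub, sub_sub_cancel]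
      exact hfE _ (P x).2
    have h2 : f (x - ↑(P x)) ∈ Eᗮ := hfEc _ (Submodule.sub_starProjection_mem_orthogonal (K := E) x)
    have h3 : RCLike.re ⟪f x - f (x - ↑(P x)), f (x - ↑(P x))⟫ = 0 := by
      rw [(Submodule.mem_orthogonal E _).mp h2 _ h1]
      simp
    have h4 : ‖f x‖ ^ 2 = ‖f x - f (x - ↑(P x))‖ ^ 2 + ‖f (x - ↑(P x))‖ ^ 2 := by
      have h5 := norm_add_sq (𝕜 := ℂ) (f x - f (x - ↑(P x))) (f (x - ↑(P x)))
      rw [sub_add_cancel] at h5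
      rw [h5, h3]
      ring
    linarith [sq_nonneg ‖f x - f (x - ↑(P x))‖]
  set u := w - ↑(P w) with hudef
  set u' := v - ↑(P v) with hu'def
  have huE : u ∈ Eᗮ := Submodule.sub_starProjection_mem_orthogonal (K := E) w
  have hu'E : u' ∈ Eᗮ := Submodule.sub_starProjection_mem_orthogonal (K := E) v
  have hdu : ‖d u‖ ^ 2 ≤ α * γ := le_trans (hproj_bound d hdE hdEc w) hw
  have hd'u' : ‖d' u'‖ ^ 2 ≤ α * γ := le_trans (hproj_bound d' hd'E hd'Ec v) hv
  have huu' : ‖u - u'‖ ^ 2 ≤ β := by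
    have hPsub : (↑(P (w - v)) : W) = ↑(P w) - ↑(P v) := by
      rw [map_sub]
      rfl
    have hdiff : u - u' = (w - v) - ↑(P (w - v)) := by
      rw [hudef, hu'def, hPsub]
      abel
    rw [hdiff]
    exact le_trans (hproj_bound (LinearMap.id) (fun x h => h) (fun x h => h) (w - v)) hwv
  obtain ⟨z, hzE, hzT⟩ := hsurj u huE
  obtain ⟨z', hz'E, hz'T⟩ := hsurj u' hu'E
  set a := d' (d z) with hadef
  set bb := d (d' z) with hbbdef
  set a' := d' (d z') with ha'def
  set bb' := d (d' z') with hbb'def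
  have hu_ab : u = bb + a := by rw [← hzT, hTx]
  have hu'_ab : u' = bb' + a' := by rw [← hz'T, hTx]
  have haEc : a ∈ Eᗮ := hd'Ec _ (hdEc _ hzE)
  have hbbEc : bb ∈ Eᗮ := hdEc _ (hd'Ec _ hzE)
  have ha'Ec : a' ∈ Eᗮ := hd'Ec _ (hdEc _ hz'E)
  have hbb'Ec : bb' ∈ Eᗮ := hdEc _ (hd'Ec _ hz'E)
  have hcross : ∀ p q : W, ⟪d p, d' q⟫ = 0 := by
    intro p q
    rw [hdadj p (d' q), hdd'0 q, inner_zero_right]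
  have hpyth : ∀ p q : W, ‖d p + d' q‖ ^ 2 = ‖d p‖ ^ 2 + ‖d' q‖ ^ 2 := by
    intro p q
    rw [norm_add_sq (𝕜 := ℂ), hcross p q]
    simp
  have hnorm_u : ‖u‖ ^ 2 = ‖bb‖ ^ 2 + ‖a‖ ^ 2 := by
    rw [hu_ab, hbbdef, hadef]
    exact hpyth (d' z) (d z)
  have hnorm_u' : ‖u'‖ ^ 2 = ‖bb'‖ ^ 2 + ‖a'‖ ^ 2 := by
    rw [hu'_ab, hbb'def, ha'def]
    exact hpyth (d' z') (d z')
  have hdiff2 : u - u' = d (d' z - d' z') + d' (d z - d z') := by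
    rw [hu_ab, hu'_ab, map_sub, map_sub]
    abel
  have hnorm_diff : ‖u - u'‖ ^ 2 = ‖bb - bb'‖ ^ 2 + ‖a - a'‖ ^ 2 := by
    rw [hdiff2, hpyth, hbbdef, hbb'def, hadef, ha'def, map_sub, map_sub]
  have ha_d : d a = d u := by
    rw [hu_ab, map_add, hbbdef, hdd0 (d' z), zero_add]
  have ha_d' : d' a = 0 := hdd'0 (d z)
  have hbb'_d' : d' bb' = d' u' := by
    rw [hu'_ab, map_add, ha'def, hdd'0 (d z'), add_zero]
  have hbb'_d : d bb' = 0 := hdd0 (d' z')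
  have hA : ‖a‖ ^ 2 ≤ α := by
    rcases eq_or_lt_of_le hγ with h0 | h0
    · have hdu0 : d u = 0 := by
        have h1 : ‖d u‖ ^ 2 ≤ 0 := by rw [← h0] at hdu; simpa using hdu
        have h2 : ‖d u‖ ^ 2 = 0 := le_antisymm h1 (sq_nonneg _)
        exact norm_eq_zero.mp (sq_eq_zero_iff.mp h2)
      have hA0 : a = 0 := hker0 a haEc (by rw [ha_d, hdu0]) ha_d'
      simp [hA0, hα]
    · have h1 : γ * ‖a‖ ^ 2 ≤ γ * α := by
        calc γ * ‖a‖ ^ 2 ≤ RCLike.re ⟪T a, a⟫ := hgap a haEc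
          _ = ‖d a‖ ^ 2 + ‖d' a‖ ^ 2 := hre a
          _ = ‖d u‖ ^ 2 := by rw [ha_d, ha_d']; simp
          _ ≤ α * γ := hdu
          _ = γ * α := mul_comm _ _
      exact le_of_mul_le_mul_left h1 h0
  have hB' : ‖bb'‖ ^ 2 ≤ α := by
    rcases eq_or_lt_of_le hγ with h0 | h0
    · have hdu0 : d' u' = 0 := by
        have h1 : ‖d' u'‖ ^ 2 ≤ 0 := by rw [← h0] at hd'u'; simpa using hd'u'
        have h2 : ‖d' u'‖ ^ 2 = 0 := le_antisymm h1 (sq_nonneg _)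
        exact norm_eq_zero.mp (sq_eq_zero_iff.mp h2)
      have hA0 : bb' = 0 := hker0 bb' hbb'Ec hbb'_d (by rw [hbb'_d', hdu0])
      simp [hA0, hα]
    · have h1 : γ * ‖bb'‖ ^ 2 ≤ γ * α := by
        calc γ * ‖bb'‖ ^ 2 ≤ RCLike.re ⟪T bb', bb'⟫ := hgap bb' hbb'Ec
          _ = ‖d bb'‖ ^ 2 + ‖d' bb'‖ ^ 2 := hre bb'
          _ = ‖d' u'‖ ^ 2 := by rw [hbb'_d, hbb'_d']; simp
          _ ≤ α * γ := hd'u'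
          _ = γ * α := mul_comm _ _
      exact le_of_mul_le_mul_left h1 h0
  have h_bbd : ‖bb - bb'‖ ^ 2 ≤ β := by linarith [sq_nonneg ‖a - a'‖]
  have hBB : ‖bb‖ ^ 2 ≤ 2 * α + 2 * β := by
    have h1 : ‖bb‖ ≤ ‖bb'‖ + ‖bb - bb'‖ := by
      calc ‖bb‖ = ‖bb' + (bb - bb')‖ := by congr 1; abel
        _ ≤ ‖bb'‖ + ‖bb - bb'‖ := norm_add_le _ _
    have h2 : ‖bb‖ ^ 2 ≤ (‖bb'‖ + ‖bb - bb'‖) ^ 2 := pow_le_pow_left₀ (norm_nonneg _) h1 2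
    have h3 : (‖bb'‖ + ‖bb - bb'‖) ^ 2 = ‖bb'‖ ^ 2 + 2 * ‖bb'‖ * ‖bb - bb'‖ + ‖bb - bb'‖ ^ 2 := by
      ring
    have h4 : 2 * ‖bb'‖ * ‖bb - bb'‖ ≤ ‖bb'‖ ^ 2 + ‖bb - bb'‖ ^ 2 := two_mul_le_add_sq _ _
    linarith
  calc ‖u‖ ^ 2 = ‖bb‖ ^ 2 + ‖a‖ ^ 2 := hnorm_u
    _ ≤ 3 * α + 2 * β := by linarith

/-- Refined spectral projection estimate: with `D = d + d*` on a finite-dimensional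
complex `(W, d)` (`d² = 0`), if `‖d w‖² ≤ αγ`, `‖d* v‖² ≤ αγ` and `‖w − v‖² ≤ β`,
then `‖w − P^{[0,γ]} w‖² ≤ 3α + 2β` and `‖v − P^{[0,γ]} v‖² ≤ 3α + 2β`, where
`P^{[0,γ]}` is the spectral projection of `D²` onto eigenvalues in `[0, γ]`. -/
theorem stmt4 {W : Type*} [NormedAddCommGroup W] [InnerProductSpace ℂ W]
    [FiniteDimensional ℂ W] (d : W →ₗ[ℂ] W) (hd : d ∘ₗ d = 0)
    (α β γ : ℝ) (hα : 0 ≤ α) (hβ : 0 ≤ β) (hγ : 0 ≤ γ) (w v : W)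
    (hw : ‖d w‖ ^ 2 ≤ α * γ) (hv : ‖LinearMap.adjoint d v‖ ^ 2 ≤ α * γ)
    (hwv : ‖w - v‖ ^ 2 ≤ β) :
    let D := d + LinearMap.adjoint d
    ‖w - (Submodule.orthogonalProjectionOnto
        (⨆ lam ∈ Set.Icc (0 : ℝ) γ, Module.End.eigenspace (D ∘ₗ D) (lam : ℂ)) w : W)‖ ^ 2
      ≤ 3 * α + 2 * β ∧
    ‖v - (Submodule.orthogonalProjectionOnto
        (⨆ lam ∈ Set.Icc (0 : ℝ) γ, Module.End.eigenspace (D ∘ₗ D) (lam : ℂ)) v : W)‖ ^ 2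
      ≤ 3 * α + 2 * β := by
  intro D
  have hdd' : LinearMap.adjoint d ∘ₗ LinearMap.adjoint d = 0 := by
    rw [← LinearMap.adjoint_comp, hd, map_zero]
  constructor
  · exact aux4 d hd α β γ hα hβ hγ w v hw hv hwv
  · have h2 := aux4 (LinearMap.adjoint d) hdd' α β γ hα hβ hγ v w hv
      (by rw [LinearMap.adjoint_adjoint]; exact hw)
      (by rw [norm_sub_rev]; exact hwv)
    rw [LinearMap.adjoint_adjoint, add_comm (LinearMap.adjoint d) d] at h2
    exact h2
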